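/- Let E and F be real inner product spaces, let r be a positive integer, and let φ : Fin r → E and ψ : Fin r → F be families of vectors. Let M be the Gram matrix of φ in E and let S be the r×r matrix with entries S_{ij} = ⟨φ_j, φ_i⟩_E + ⟨ψ_j, ψ_i⟩_F, and assume M is positive definite. Then for every x ∈ ℝ^r, (‖Σ_{j=1}^r x_j φ_j‖_E² + ‖Σ_{j=1}^r x_j ψ_j‖_F²)^{1/2} ≤ √(‖S‖₂ · ‖M⁻¹‖₂) · ‖Σ_{j=1}^r x_j φ_j‖_E. -/

import Mathlib

open scoped Matrix RealInnerProductSpace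

/-- The spectral norm of a real `r × r` matrix: the operator norm of the matrix
acting on Euclidean space `ℝ^r` with the `ℓ²` norm. -/
noncomputable def matrixSpectralNorm {r : ℕ} (A : Matrix (Fin r) (Fin r) ℝ) : ℝ :=
  ‖Matrix.toEuclideanCLM (𝕜 := ℝ) A‖

/-- The Gram matrix of a family `φ : Fin r → E` in a real inner product space `E`:
the `r × r` real matrix with entries `M i j = ⟪φ j, φ i⟫`. -/
noncomputable def gramMatrix {E : Type*} [NormedAddCommGroup E] [InnerProductSpace ℝ E]
    {r : ℕ} (φ : Fin r → E) : Matrix (Fin r) (Fin r) ℝ :=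
  Matrix.of fun i j => ⟪φ j, φ i⟫

/-- The `H¹`-type Gram matrix of two families `φ : Fin r → E`, `ψ : Fin r → F`:
the `r × r` real matrix with entries `S i j = ⟪φ j, φ i⟫_E + ⟪ψ j, ψ i⟫_F`. -/
noncomputable def sobolevGramMatrix {E F : Type*}
    [NormedAddCommGroup E] [InnerProductSpace ℝ E]
    [NormedAddCommGroup F] [InnerProductSpace ℝ F]
    {r : ℕ} (φ : Fin r → E) (ψ : Fin r → F) : Matrix (Fin r) (Fin r) ℝ :=
  Matrix.of fun i j => ⟪φ j, φ i⟫ + ⟪ψ j, ψ i⟫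

lemma dot_gram {G : Type*} [NormedAddCommGroup G] [InnerProductSpace ℝ G]
    {r : ℕ} (v w : Fin r → G) (x y : Fin r → ℝ) :
    x ⬝ᵥ ((Matrix.of fun i j => (⟪w j, v i⟫ : ℝ)) *ᵥ y) =
      ⟪∑ j, y j • w j, ∑ i, x i • v i⟫ := by
  simp only [dotProduct, Matrix.mulVec, Matrix.of_apply, sum_inner, inner_sum,
    real_inner_smul_left, real_inner_smul_right, Finset.mul_sum]
  exact Finset.sum_congr rfl fun i _ => Finset.sum_congr rfl fun j _ => by ring

/-- POD inverse estimate: if `M` is the (positive definite) Gram matrix of `φ` in `E`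
and `S` the matrix `S i j = ⟪φ j, φ i⟫ + ⟪ψ j, ψ i⟫`, then for every `x ∈ ℝ^r`,
`(‖∑ x j • φ j‖² + ‖∑ x j • ψ j‖²)^(1/2) ≤ √(‖S‖₂ ‖M⁻¹‖₂) ‖∑ x j • φ j‖`. -/
theorem pod_inverse_estimate_H1_le_L2
    {E F : Type*} [NormedAddCommGroup E] [InnerProductSpace ℝ E]
    [NormedAddCommGroup F] [InnerProductSpace ℝ F]
    (r : ℕ) (hr : 0 < r) (φ : Fin r → E) (ψ : Fin r → F)
    (hMpos : (gramMatrix φ).PosDef) :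
    ∀ x : Fin r → ℝ,
      Real.sqrt (‖∑ j, x j • φ j‖ ^ 2 + ‖∑ j, x j • ψ j‖ ^ 2) ≤
        Real.sqrt (matrixSpectralNorm (sobolevGramMatrix φ ψ) * matrixSpectralNorm (gramMatrix φ)⁻¹) *
          ‖∑ j, x j • φ j‖ := by
  intro x
  classical
  set M := gramMatrix φ with hMdef
  set S := sobolevGramMatrix φ ψ with hSdef
  set yE := ∑ j, x j • φ j with hyE
  set yF := ∑ j, x j • ψ j with hyF
  set x' : EuclideanSpace ℝ (Fin r) := (WithLp.equiv 2 (Fin r → ℝ)).symm x with hx'def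
  -- inner product on Euclidean space is dot product
  have hinner : ∀ a b : Fin r → ℝ,
      (⟪(WithLp.equiv 2 (Fin r → ℝ)).symm a, (WithLp.equiv 2 (Fin r → ℝ)).symm b⟫ : ℝ)
        = a ⬝ᵥ b := by
    intro a b
    simp [PiLp.inner_apply, RCLike.inner_apply, dotProduct,
      mul_comm]
  have hxnorm : ‖x'‖ ^ 2 = x ⬝ᵥ x := by
    rw [← real_inner_self_eq_norm_sq, hx'def, hinner]
  -- spectral norm bound on quadratic forms
  have key : ∀ A : Matrix (Fin r) (Fin r) ℝ, x ⬝ᵥ (A *ᵥ x) ≤ matrixSpectralNorm A * ‖x'‖ ^ 2 := by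
    intro A
    have h1 : (WithLp.equiv 2 (Fin r → ℝ)).symm (A *ᵥ x)
        = Matrix.toEuclideanCLM (𝕜 := ℝ) A x' := by
      rfl
    have h2 : x ⬝ᵥ (A *ᵥ x) = ⟪Matrix.toEuclideanCLM (𝕜 := ℝ) A x', x'⟫ := by
      rw [← h1, hx'def, hinner, dotProduct_comm]
    calc x ⬝ᵥ (A *ᵥ x) = ⟪Matrix.toEuclideanCLM (𝕜 := ℝ) A x', x'⟫ := h2
      _ ≤ ‖Matrix.toEuclideanCLM (𝕜 := ℝ) A x'‖ * ‖x'‖ := real_inner_le_norm _ _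
      _ ≤ (‖Matrix.toEuclideanCLM (𝕜 := ℝ) A‖ * ‖x'‖) * ‖x'‖ :=
          mul_le_mul_of_nonneg_right ((Matrix.toEuclideanCLM (𝕜 := ℝ) A).le_opNorm x')
            (norm_nonneg _)
      _ = matrixSpectralNorm A * ‖x'‖ ^ 2 := by rw [matrixSpectralNorm]; ring
  -- quadratic form identities
  have hE : x ⬝ᵥ (M *ᵥ x) = ‖yE‖ ^ 2 := by
    rw [hMdef, gramMatrix, dot_gram, ← hyE, real_inner_self_eq_norm_sq]
  have hSxx : x ⬝ᵥ (S *ᵥ x) = ‖yE‖ ^ 2 + ‖yF‖ ^ 2 := by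
    have hSsplit : S = gramMatrix φ + gramMatrix ψ := by
      ext i j; simp [hSdef, sobolevGramMatrix, gramMatrix]
    rw [hSsplit, Matrix.add_mulVec, dotProduct_add, gramMatrix, gramMatrix,
      dot_gram, dot_gram, ← hyE, ← hyF, real_inner_self_eq_norm_sq,
      real_inner_self_eq_norm_sq]
  -- the inverse bound : ‖x‖² ≤ ‖M⁻¹‖ ‖yE‖²
  set z := M⁻¹ *ᵥ x with hzdef
  set zE := ∑ j, z j • φ j with hzE
  have hMz : M *ᵥ z = x := by
    rw [hzdef, Matrix.mulVec_mulVec,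
      Matrix.mul_nonsing_inv _ (isUnit_iff_ne_zero.2 hMpos.det_pos.ne'), Matrix.one_mulVec]
  have hxx_inner : x ⬝ᵥ x = ⟪zE, yE⟫ := by
    have h := dot_gram φ φ x z
    rw [show (Matrix.of fun i j => (⟪φ j, φ i⟫ : ℝ)) = M from rfl, hMz] at h
    exact h
  have hzE2 : ‖zE‖ ^ 2 = z ⬝ᵥ x := by
    have h := dot_gram φ φ z z
    rw [show (Matrix.of fun i j => (⟪φ j, φ i⟫ : ℝ)) = M from rfl, hMz] at h
    rw [h, real_inner_self_eq_norm_sq]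
  have hz'bound : z ⬝ᵥ x ≤ matrixSpectralNorm M⁻¹ * ‖x'‖ ^ 2 := by
    have h1 : (WithLp.equiv 2 (Fin r → ℝ)).symm z = Matrix.toEuclideanCLM (𝕜 := ℝ) M⁻¹ x' := by
      rfl
    have h2 : z ⬝ᵥ x = ⟪Matrix.toEuclideanCLM (𝕜 := ℝ) M⁻¹ x', x'⟫ := by
      rw [← h1, hx'def, hinner]
    rw [h2]
    calc (⟪Matrix.toEuclideanCLM (𝕜 := ℝ) M⁻¹ x', x'⟫ : ℝ)
        ≤ ‖Matrix.toEuclideanCLM (𝕜 := ℝ) M⁻¹ x'‖ * ‖x'‖ := real_inner_le_norm _ _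
      _ ≤ (‖Matrix.toEuclideanCLM (𝕜 := ℝ) M⁻¹‖ * ‖x'‖) * ‖x'‖ :=
          mul_le_mul_of_nonneg_right ((Matrix.toEuclideanCLM (𝕜 := ℝ) M⁻¹).le_opNorm x')
            (norm_nonneg _)
      _ = matrixSpectralNorm M⁻¹ * ‖x'‖ ^ 2 := by rw [matrixSpectralNorm]; ring
  have hspecnn : 0 ≤ matrixSpectralNorm M⁻¹ := norm_nonneg _
  have hSpecSnn : 0 ≤ matrixSpectralNorm S := norm_nonneg _
  have hzEle : ‖zE‖ ≤ Real.sqrt (matrixSpectralNorm M⁻¹) * ‖x'‖ := by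
    have h : ‖zE‖ ^ 2 ≤ (Real.sqrt (matrixSpectralNorm M⁻¹) * ‖x'‖) ^ 2 := by
      rw [mul_pow, Real.sq_sqrt hspecnn, hzE2]
      exact hz'bound
    have h2 := Real.sqrt_le_sqrt h
    rwa [Real.sqrt_sq (norm_nonneg _), Real.sqrt_sq (mul_nonneg (Real.sqrt_nonneg _) (norm_nonneg _))] at h2
  have hx2_le : ‖x'‖ ^ 2 ≤ matrixSpectralNorm M⁻¹ * ‖yE‖ ^ 2 := by
    have h1 : ‖x'‖ ^ 2 ≤ (Real.sqrt (matrixSpectralNorm M⁻¹) * ‖x'‖) * ‖yE‖ := by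
      rw [hxnorm, hxx_inner]
      exact (real_inner_le_norm zE yE).trans
        (mul_le_mul_of_nonneg_right hzEle (norm_nonneg _))
    rcases eq_or_lt_of_le (norm_nonneg x') with h | h
    · rw [← h]
      have : (0:ℝ) ^ 2 ≤ matrixSpectralNorm M⁻¹ * ‖yE‖ ^ 2 := by
        simpa using mul_nonneg hspecnn (sq_nonneg ‖yE‖)
      simpa using this
    · have h2 : ‖x'‖ ≤ Real.sqrt (matrixSpectralNorm M⁻¹) * ‖yE‖ := by
        have h3 : ‖x'‖ * ‖x'‖ ≤ (Real.sqrt (matrixSpectralNorm M⁻¹) * ‖yE‖) * ‖x'‖ := by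
          nlinarith [h1]
        exact le_of_mul_le_mul_right h3 h
      have h4 : ‖x'‖ ^ 2 ≤ (Real.sqrt (matrixSpectralNorm M⁻¹) * ‖yE‖) ^ 2 :=
        pow_le_pow_left₀ (norm_nonneg _) h2 2
      rwa [mul_pow, Real.sq_sqrt hspecnn] at h4
  have hmain : ‖yE‖ ^ 2 + ‖yF‖ ^ 2 ≤
      matrixSpectralNorm S * matrixSpectralNorm M⁻¹ * ‖yE‖ ^ 2 := by
    rw [← hSxx]
    refine (key S).trans ?_
    rw [mul_assoc]
    exact mul_le_mul_of_nonneg_left hx2_le hSpecSnn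
  have hfin := Real.sqrt_le_sqrt hmain
  rwa [Real.sqrt_mul (by positivity) (‖yE‖ ^ 2), Real.sqrt_sq (norm_nonneg _)] at hfin
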